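/- arXiv:1509.06645 — 2 statements merged into one kernel-verified Lean document; each statement's English description precedes it below -/
import Mathlib

section
/- Let (λ_j) be a nondecreasing sequence of nonnegative reals tending to infinity with counting function N(λ) = #{j : λ_j ≤ λ}, and suppose ∑_j e^{-tλ_j} ~ A t^{-d/2} as t → 0⁺ for some constants A > 0 and d > 0. Then N(λ) ~ (A/Γ(d/2+1)) λ^{d/2} as λ → ∞. -/
open Filter Real MeasureTheory


private noncomputable def ramp (u v : ℝ) : ℝ → ℝ := fun x => max 0 (min 1 ((x - u)/(v - u)))

private lemma ramp_cont {u v : ℝ} (huv : u < v) : Continuous (ramp u v) := by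
  unfold ramp
  fun_prop (disch := intros; positivity)

private lemma ramp_nonneg (u v x : ℝ) : 0 ≤ ramp u v x := le_max_left _ _

private lemma ramp_le_one {u v : ℝ} (huv : u < v) (x : ℝ) : ramp u v x ≤ 1 := by
  unfold ramp
  rcases le_or_gt ((x - u)/(v - u)) 1 with h | h
  · exact max_le (by norm_num) (min_le_left _ _)
  · simp [min_eq_left h.le]

private lemma ramp_eq_zero {u v x : ℝ} (huv : u < v) (hx : x ≤ u) : ramp u v x = 0 := by
  unfold ramp
  have h : (x - u)/(v - u) ≤ 0 := div_nonpos_of_nonpos_of_nonneg (by linarith) (by linarith)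
  have : min 1 ((x - u)/(v - u)) ≤ 0 := le_trans (min_le_right _ _) h
  exact max_eq_left this

private lemma ramp_eq_one {u v x : ℝ} (huv : u < v) (hx : v ≤ x) : ramp u v x = 1 := by
  unfold ramp
  have h : 1 ≤ (x - u)/(v - u) := (one_le_div (by linarith)).2 (by linarith)
  rw [min_eq_left h, max_eq_right (by norm_num)]

private lemma ramp_div {u v : ℝ} (hu : 0 < u) (huv : u < v) (x : ℝ) :
    x * (ramp u v x / max x u) = ramp u v x := by
  rcases le_or_gt x u with h | h
  · rw [ramp_eq_zero huv h]; simp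
  · rw [max_eq_left h.le]
    rw [mul_comm, div_mul_eq_mul_div, mul_div_assoc, div_self (by linarith : x ≠ 0), mul_one]

private lemma indicator_rpow_integrable {c : ℝ} (hc : 0 < c) {y : ℝ} (hy : 0 < y) :
    Integrable ((Set.Ioo (0:ℝ) y).indicator (fun s => s ^ (c-1)))
      (volume.restrict (Set.Ioi 0)) := by
  rw [integrable_indicator_iff measurableSet_Ioo]
  have hint : IntegrableOn (fun s : ℝ => s^(c-1)) (Set.Ioo 0 y) volume := by
    rw [← intervalIntegrable_iff_integrableOn_Ioo_of_le hy.le]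
    exact intervalIntegral.intervalIntegrable_rpow' (by linarith)
  rw [IntegrableOn, Measure.restrict_restrict measurableSet_Ioo,
    Set.inter_eq_self_of_subset_left (fun s hs => hs.1)]
  exact hint

private lemma indicator_rpow_integral {c : ℝ} (hc : 0 < c) {y : ℝ} (hy : 0 < y) :
    ∫ s in Set.Ioi (0:ℝ), (Set.Ioo (0:ℝ) y).indicator (fun s => s ^ (c-1)) s = y ^ c / c := by
  rw [integral_indicator measurableSet_Ioo]
  rw [Measure.restrict_restrict measurableSet_Ioo,
    Set.inter_eq_self_of_subset_left (fun s hs => hs.1)]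
  rw [← integral_Ioc_eq_integral_Ioo, ← intervalIntegral.integral_of_le hy.le]
  rw [integral_rpow (Or.inl (by linarith))]
  have h1 : c - 1 + 1 = c := by ring
  rw [h1, Real.zero_rpow hc.ne']
  norm_num

private lemma count_eq_tsum (lam : ℕ → ℝ) (hinf : Tendsto lam atTop atTop) (x : ℝ) :
    Summable (fun j => if lam j ≤ x then (1:ℝ) else 0) ∧
    (∑' j, if lam j ≤ x then (1:ℝ) else 0) = (Nat.card {j : ℕ | lam j ≤ x} : ℝ) := by
  have hfin : {j : ℕ | lam j ≤ x}.Finite := by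
    obtain ⟨J, hJ⟩ := eventually_atTop.1 (hinf.eventually (eventually_gt_atTop x))
    apply Set.Finite.subset (Set.finite_Iio J)
    intro j hj
    by_contra h
    exact absurd hj (not_le.2 (hJ j (not_lt.1 h)))
  have hzero : ∀ j ∉ hfin.toFinset, (if lam j ≤ x then (1:ℝ) else 0) = 0 := by
    intro j hj
    simp only [Set.Finite.mem_toFinset, Set.mem_setOf_eq] at hj
    simp [hj]
  constructor
  · exact summable_of_ne_finset_zero hzero
  · rw [tsum_eq_sum hzero]
    have : ∀ j ∈ hfin.toFinset, (if lam j ≤ x then (1:ℝ) else 0) = 1 := by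
      intro j hj
      simp only [Set.Finite.mem_toFinset, Set.mem_setOf_eq] at hj
      simp [hj]
    rw [Finset.sum_congr rfl this, Finset.sum_const, nsmul_eq_mul, mul_one]
    congr 1
    rw [Nat.card_coe_set_eq, Set.ncard_eq_toFinset_card _ hfin]

private lemma summable_weight (lam : ℕ → ℝ) (hnonneg : ∀ j, 0 ≤ lam j)
    (hsum : ∀ t : ℝ, 0 < t → Summable (fun j => Real.exp (-t * lam j)))
    {t : ℝ} (ht : 0 < t) (g : ℝ → ℝ) {K : ℝ}
    (hK : ∀ x ∈ Set.Icc (0:ℝ) 1, |g x| ≤ K) :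
    Summable (fun j => Real.exp (-t * lam j) * g (Real.exp (-t * lam j))) := by
  apply Summable.of_norm_bounded ((hsum t ht).mul_left K)
  intro j
  have hmem : Real.exp (-t * lam j) ∈ Set.Icc (0:ℝ) 1 :=
    ⟨(Real.exp_pos _).le, Real.exp_le_one_iff.2 (by nlinarith [hnonneg j])⟩
  have := hK _ hmem
  rw [Real.norm_eq_abs, abs_mul, abs_of_nonneg (Real.exp_pos _).le]
  calc Real.exp (-t * lam j) * |g (Real.exp (-t * lam j))| ≤ Real.exp (-t * lam j) * K := by
        exact mul_le_mul_of_nonneg_left this (Real.exp_pos _).le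
    _ = K * Real.exp (-t * lam j) := mul_comm _ _

private lemma summable_weight_poly (lam : ℕ → ℝ) (hnonneg : ∀ j, 0 ≤ lam j)
    (hsum : ∀ t : ℝ, 0 < t → Summable (fun j => Real.exp (-t * lam j)))
    {t : ℝ} (ht : 0 < t) (p : Polynomial ℝ) :
    Summable (fun j => Real.exp (-t * lam j) * p.eval (Real.exp (-t * lam j))) := by
  obtain ⟨K, hK⟩ := (isCompact_Icc (a := (0:ℝ)) (b := 1)).exists_bound_of_continuousOn
    (p.continuous).continuousOn
  exact summable_weight lam hnonneg hsum ht (fun x => p.eval x) (fun x hx => by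
    simpa [Real.norm_eq_abs] using hK x hx)

private lemma integrable_weight {c : ℝ} (hc : 0 < c) (g : ℝ → ℝ) (hgc : Continuous g) :
    IntegrableOn (fun s => s ^ (c-1) * (Real.exp (-s) * g (Real.exp (-s)))) (Set.Ioi 0) := by
  obtain ⟨K, hK⟩ := (isCompact_Icc (a := (0:ℝ)) (b := 1)).exists_bound_of_continuousOn
    hgc.continuousOn
  apply Integrable.mono' (g := fun s => K * (Real.exp (-s) * s ^ (c-1)))
      (((Real.GammaIntegral_convergent hc).const_mul K))
  · apply ContinuousOn.aestronglyMeasurable _ measurableSet_Ioi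
    apply ContinuousOn.mul
    · exact fun x hx => (Real.continuousAt_rpow_const x _ (Or.inl (ne_of_gt hx))).continuousWithinAt
    · exact ((Real.continuous_exp.comp continuous_neg).mul
        (hgc.comp (Real.continuous_exp.comp continuous_neg))).continuousOn
  · rw [ae_restrict_iff' measurableSet_Ioi]
    filter_upwards with s hs
    have hs' : (0:ℝ) < s := hs
    have hmem : Real.exp (-s) ∈ Set.Icc (0:ℝ) 1 :=
      ⟨(Real.exp_pos _).le, Real.exp_le_one_iff.2 (by linarith)⟩
    have h1 : ‖g (Real.exp (-s))‖ ≤ K := hK _ hmem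
    have hrp : (0:ℝ) ≤ s ^ (c-1) := Real.rpow_nonneg hs'.le _
    rw [Real.norm_eq_abs, abs_mul, abs_mul, abs_of_nonneg hrp,
      abs_of_nonneg (Real.exp_pos _).le]
    rw [Real.norm_eq_abs] at h1
    nlinarith [mul_nonneg (mul_nonneg hrp (Real.exp_pos (-s)).le) (sub_nonneg.2 h1)]

private lemma key_tendsto (lam : ℕ → ℝ) (hnonneg : ∀ j, 0 ≤ lam j)
    (hsum : ∀ t : ℝ, 0 < t → Summable (fun j => Real.exp (-t * lam j)))
    {c A : ℝ} (hc : 0 < c)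
    (hZ : Tendsto (fun t => t ^ c * ∑' j, Real.exp (-t * lam j))
      (nhdsWithin 0 (Set.Ioi 0)) (nhds A)) (Q : Polynomial ℝ) :
    Tendsto (fun t => t ^ c * ∑' j, Real.exp (-t * lam j) * Q.eval (Real.exp (-t * lam j)))
      (nhdsWithin 0 (Set.Ioi 0))
      (nhds ((A / Real.Gamma c) *
        ∫ s in Set.Ioi 0, s ^ (c-1) * (Real.exp (-s) * Q.eval (Real.exp (-s))))) := by
  have hΓ : (0:ℝ) < Real.Gamma c := Real.Gamma_pos_of_pos hc
  induction Q using Polynomial.induction_on' with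
  | add p q hp hq =>
      have hint : ∀ r : Polynomial ℝ,
          IntegrableOn (fun s => s ^ (c-1) * (Real.exp (-s) * r.eval (Real.exp (-s))))
            (Set.Ioi 0) := fun r => integrable_weight hc (fun x => r.eval x) r.continuous
      have hIeq : (∫ s in Set.Ioi 0, s ^ (c-1) * (Real.exp (-s) * (p+q).eval (Real.exp (-s))))
          = (∫ s in Set.Ioi 0, s ^ (c-1) * (Real.exp (-s) * p.eval (Real.exp (-s))))
            + ∫ s in Set.Ioi 0, s ^ (c-1) * (Real.exp (-s) * q.eval (Real.exp (-s))) := by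
        rw [← integral_add (hint p) (hint q)]
        apply setIntegral_congr_fun measurableSet_Ioi
        intro s _
        simp [Polynomial.eval_add]
        ring
      rw [hIeq, mul_add]
      apply Tendsto.congr' _ (hp.add hq)
      filter_upwards [self_mem_nhdsWithin] with t ht
      have ht' : (0:ℝ) < t := ht
      have h1 := summable_weight_poly lam hnonneg hsum ht' p
      have h2 := summable_weight_poly lam hnonneg hsum ht' q
      have : (∑' j, Real.exp (-t * lam j) * (p+q).eval (Real.exp (-t * lam j)))
          = (∑' j, Real.exp (-t * lam j) * p.eval (Real.exp (-t * lam j)))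
            + ∑' j, Real.exp (-t * lam j) * q.eval (Real.exp (-t * lam j)) := by
        rw [← Summable.tsum_add h1 h2]
        apply tsum_congr; intro j; simp [Polynomial.eval_add]; ring
      rw [this]; ring
  | monomial n a =>
      have hn : (0:ℝ) < (n:ℝ) + 1 := by positivity
      have hcomp : Tendsto (fun t => ((n:ℝ)+1) * t) (nhdsWithin 0 (Set.Ioi 0))
          (nhdsWithin 0 (Set.Ioi 0)) := by
        apply tendsto_nhdsWithin_of_tendsto_nhds_of_eventually_within
        · have : Tendsto (fun t : ℝ => ((n:ℝ)+1) * t) (nhdsWithin 0 (Set.Ioi 0))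
              (nhds (((n:ℝ)+1)*0)) :=
            (continuous_const.mul continuous_id).continuousAt.tendsto.mono_left nhdsWithin_le_nhds
          simpa using this
        · filter_upwards [self_mem_nhdsWithin] with t ht
          exact Set.mem_Ioi.2 (mul_pos hn ht)
      have hlim : Tendsto (fun t => (a * ((n:ℝ)+1) ^ (-c)) *
          ((((n:ℝ)+1) * t) ^ c * ∑' j, Real.exp (-(((n:ℝ)+1) * t) * lam j)))
          (nhdsWithin 0 (Set.Ioi 0)) (nhds ((a * ((n:ℝ)+1) ^ (-c)) * A)) :=
        (hZ.comp hcomp).const_mul _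
      have hexp : ∀ t : ℝ, ∀ j, Real.exp (-t * lam j) * (a * Real.exp (-t * lam j) ^ n)
          = a * Real.exp (-(((n:ℝ)+1) * t) * lam j) := by
        intro t j
        have : Real.exp (-(((n:ℝ)+1) * t) * lam j) = Real.exp ((((n:ℕ)+1 : ℕ):ℝ) * (-t * lam j)) := by
          congr 1; push_cast; ring
        rw [this, Real.exp_nat_mul, pow_succ]
        ring
      have hval : (a * ((n:ℝ)+1) ^ (-c)) * A = (A / Real.Gamma c) *
          ∫ s in Set.Ioi 0, s ^ (c-1) *
            (Real.exp (-s) * (Polynomial.monomial n a).eval (Real.exp (-s))) := by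
        have hI : (∫ s in Set.Ioi 0, s ^ (c-1) *
            (Real.exp (-s) * (Polynomial.monomial n a).eval (Real.exp (-s))))
            = a * ((1/((n:ℝ)+1)) ^ c * Real.Gamma c) := by
          rw [← Real.integral_rpow_mul_exp_neg_mul_Ioi hc hn, ← integral_const_mul]
          apply setIntegral_congr_fun measurableSet_Ioi
          intro s _
          simp only [Polynomial.eval_monomial]
          have hx : Real.exp (-s) * Real.exp (-s) ^ n = Real.exp (-(((n:ℝ)+1) * s)) := by
            rw [← pow_succ', ← Real.exp_nat_mul]
            congr 1; push_cast; ring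
          linear_combination (a * s ^ (c-1)) * hx
        rw [hI]
        have h1 : ((1:ℝ)/((n:ℝ)+1)) ^ c = ((n:ℝ)+1) ^ (-c) := by
          rw [one_div, Real.inv_rpow hn.le, Real.rpow_neg hn.le]
        rw [h1]
        field_simp
      rw [← hval]
      apply Tendsto.congr' _ hlim
      filter_upwards [self_mem_nhdsWithin] with t ht
      have ht' : (0:ℝ) < t := ht
      have hS : (∑' j, Real.exp (-t * lam j) *
          (Polynomial.monomial n a).eval (Real.exp (-t * lam j)))
          = a * ∑' j, Real.exp (-(((n:ℝ)+1) * t) * lam j) := by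
        rw [← tsum_mul_left]
        apply tsum_congr; intro j
        rw [Polynomial.eval_monomial]; exact hexp t j
      rw [hS]
      have hrp : (((n:ℝ)+1) * t) ^ c = ((n:ℝ)+1) ^ c * t ^ c :=
        Real.mul_rpow hn.le ht'.le
      have hrpn : ((n:ℝ)+1) ^ (-c) * ((n:ℝ)+1) ^ c = 1 := by
        rw [← Real.rpow_add hn]; simp
      rw [hrp]
      linear_combination (a * t ^ c * (∑' j, Real.exp (-(((n:ℝ)+1) * t) * lam j))) * hrpn

set_option maxHeartbeats 2000000 in
/-- Karamata's Tauberian theorem: if `∑_j e^{-t λ_j} ~ A t^{-d/2}` as `t → 0⁺`,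
then the counting function satisfies `N(λ) ~ (A/Γ(d/2+1)) λ^{d/2}` as `λ → ∞`. -/
theorem karamata_weyl (lam : ℕ → ℝ) (hnonneg : ∀ j, 0 ≤ lam j)
    (hmono : Monotone lam) (hinf : Tendsto lam atTop atTop)
    (A d : ℝ) (hA : 0 < A) (hd : 0 < d)
    (hsum : ∀ t : ℝ, 0 < t → Summable (fun j => Real.exp (-t * lam j)))
    (hasymp : Tendsto (fun t : ℝ =>
        (∑' j, Real.exp (-t * lam j)) / (A * t ^ (-(d / 2))))
      (nhdsWithin 0 (Set.Ioi 0)) (nhds 1)) :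
    Tendsto (fun x : ℝ =>
        (Nat.card {j : ℕ | lam j ≤ x} : ℝ) /
          (A / Real.Gamma (d / 2 + 1) * x ^ (d / 2)))
      atTop (nhds 1) := by
  have hc : (0:ℝ) < d/2 := by linarith
  set c : ℝ := d/2 with hcdef
  have hΓ : (0:ℝ) < Real.Gamma c := Real.Gamma_pos_of_pos hc
  have hΓ1 : Real.Gamma (c+1) = c * Real.Gamma c := Real.Gamma_add_one (ne_of_gt hc)
  have hΓ1pos : (0:ℝ) < Real.Gamma (c+1) := by rw [hΓ1]; positivity
  set F1 : ℝ := A / Real.Gamma (c+1) with hF1def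
  have hF1 : 0 < F1 := div_pos hA hΓ1pos
  set N : ℝ → ℝ := fun x => (Nat.card {j : ℕ | lam j ≤ x} : ℝ) with hNdef
  have hN : ∀ x, N x = (Nat.card {j : ℕ | lam j ≤ x} : ℝ) := fun x => rfl
  have hZ : Tendsto (fun t => t ^ c * ∑' j, Real.exp (-t * lam j))
      (nhdsWithin 0 (Set.Ioi 0)) (nhds A) := by
    have h1 := hasymp.const_mul A
    rw [mul_one] at h1
    apply Tendsto.congr' _ h1
    filter_upwards [self_mem_nhdsWithin] with t ht
    have ht' : (0:ℝ) < t := ht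
    have h3 : (t:ℝ) ^ c ≠ 0 := (Real.rpow_pos_of_pos ht' c).ne'
    rw [Real.rpow_neg ht'.le]
    field_simp
  have hmain : Tendsto (fun t => t ^ c * N t⁻¹) (nhdsWithin 0 (Set.Ioi 0)) (nhds F1) := by
    rw [Metric.tendsto_nhds]
    intro ε hε
    -- choose η via continuity
    have hcont : ContinuousAt (fun y : ℝ => A * y ^ c / Real.Gamma (c+1)) 1 :=
      ((Real.continuousAt_rpow_const 1 c (Or.inl one_ne_zero)).const_mul A).div_const _
    obtain ⟨δ, hδpos, hδ⟩ := Metric.continuousAt_iff.1 hcont (ε/4) (by linarith)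
    set η : ℝ := min (δ/2) (1/2) with hηdef
    have hη0 : 0 < η := lt_min (by linarith) (by norm_num)
    have hη2 : η ≤ 1/2 := min_le_right _ _
    have hηδ : η < δ := lt_of_le_of_lt (min_le_left _ _) (by linarith)
    have hFval : A * (1:ℝ) ^ c / Real.Gamma (c+1) = F1 := by rw [Real.one_rpow, mul_one]
    have hup : A * (1+η) ^ c / Real.Gamma (c+1) < F1 + ε/4 := by
      have h := hδ (x := 1+η) (by
        rw [Real.dist_eq, show (1+η-1:ℝ) = η by ring, abs_of_pos hη0]; exact hηδ)
      rw [Real.dist_eq, hFval] at h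
      have h' := abs_sub_lt_iff.1 h
      linarith [h'.1]
    have hlow : F1 - ε/4 < A * (1-η) ^ c / Real.Gamma (c+1) := by
      have h := hδ (x := 1-η) (by
        rw [Real.dist_eq, show (1-η-1:ℝ) = -η by ring, abs_neg, abs_of_pos hη0]; exact hηδ)
      rw [Real.dist_eq, hFval] at h
      have h' := abs_sub_lt_iff.1 h
      linarith [h'.2]
    set ε' : ℝ := ε / (8 * A) with hε'def
    have hε' : 0 < ε' := by rw [hε'def]; positivity
    have h2εA : 2 * ε' * A = ε / 4 := by rw [hε'def]; field_simp; ring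
    -- geometry
    set a0 : ℝ := Real.exp (-1) with ha0def
    set b1 : ℝ := Real.exp (-(1-η)) with hb1def
    set b2 : ℝ := Real.exp (-(1+η)) with hb2def
    have ha0pos : 0 < a0 := Real.exp_pos _
    have hb2pos : 0 < b2 := Real.exp_pos _
    have ha0b1 : a0 < b1 := Real.exp_lt_exp.2 (by linarith)
    have hb2a0 : b2 < a0 := Real.exp_lt_exp.2 (by linarith)
    -- Weierstrass approximations
    have hcont2 : ContinuousOn (fun x => ramp b2 a0 x / max x b2) (Set.Icc 0 1) :=
      ((ramp_cont hb2a0).div (continuous_id.max continuous_const)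
        (fun x => (lt_of_lt_of_le hb2pos (le_max_right x b2)).ne')).continuousOn
    have hcont1 : ContinuousOn (fun x => ramp a0 b1 x / max x a0) (Set.Icc 0 1) :=
      ((ramp_cont ha0b1).div (continuous_id.max continuous_const)
        (fun x => (lt_of_lt_of_le ha0pos (le_max_right x a0)).ne')).continuousOn
    obtain ⟨q2, hq2⟩ := exists_polynomial_near_of_continuousOn 0 1 _ hcont2 ε' hε'
    obtain ⟨q1, hq1⟩ := exists_polynomial_near_of_continuousOn 0 1 _ hcont1 ε' hε'
    set Q2 : Polynomial ℝ := q2 + Polynomial.C ε' with hQ2def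
    set Q1 : Polynomial ℝ := q1 - Polynomial.C ε' with hQ1def
    -- upper integral bound
    have hIup : (∫ s in Set.Ioi (0:ℝ), s ^ (c-1) * (Real.exp (-s) * Q2.eval (Real.exp (-s))))
        ≤ (1+η) ^ c / c + 2*ε'*Real.Gamma c := by
      have hintR : Integrable (fun s : ℝ => (Set.Ioo (0:ℝ) (1+η)).indicator (fun s => s ^ (c-1)) s
          + 2*ε' * (Real.exp (-s) * s ^ (c-1))) (volume.restrict (Set.Ioi 0)) :=
        (indicator_rpow_integrable hc (by linarith)).add
          ((Real.GammaIntegral_convergent hc).const_mul _)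
      have hmono := setIntegral_mono_on
        (integrable_weight hc (fun x => Q2.eval x) Q2.continuous) hintR measurableSet_Ioi ?_
      · have hRval : (∫ s in Set.Ioi (0:ℝ), ((Set.Ioo (0:ℝ) (1+η)).indicator (fun s => s ^ (c-1)) s
            + 2*ε' * (Real.exp (-s) * s ^ (c-1))))
            = (1+η)^c/c + 2*ε'*Real.Gamma c := by
          rw [integral_add (indicator_rpow_integrable hc (by linarith))
            ((Real.GammaIntegral_convergent hc).const_mul _)]
          rw [indicator_rpow_integral hc (by linarith), integral_const_mul,
            ← Real.Gamma_eq_integral hc]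
        linarith [hmono, le_of_eq hRval]
      · intro s hs
        have hs' : (0:ℝ) < s := hs
        have hx0 : (0:ℝ) < Real.exp (-s) := Real.exp_pos _
        have hx1 : Real.exp (-s) ≤ 1 := Real.exp_le_one_iff.2 (by linarith)
        have hrp : (0:ℝ) ≤ s ^ (c-1) := Real.rpow_nonneg hs'.le _
        have h6 : q2.eval (Real.exp (-s)) - ramp b2 a0 (Real.exp (-s)) / max (Real.exp (-s)) b2
            < ε' := (abs_sub_lt_iff.1 (hq2 _ ⟨hx0.le, hx1⟩)).1
        have h8 : Real.exp (-s) * (ramp b2 a0 (Real.exp (-s)) / max (Real.exp (-s)) b2)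
            = ramp b2 a0 (Real.exp (-s)) := ramp_div hb2pos hb2a0 _
        have h7 : Q2.eval (Real.exp (-s)) = q2.eval (Real.exp (-s)) + ε' := by
          rw [hQ2def]; simp
        have hq : Real.exp (-s) * Q2.eval (Real.exp (-s))
            ≤ ramp b2 a0 (Real.exp (-s)) + 2*ε'*Real.exp (-s) := by
          rw [h7]
          nlinarith [mul_lt_mul_of_pos_left h6 hx0]
        rcases lt_or_ge s (1+η) with hcase | hcase
        · rw [Set.indicator_of_mem (Set.mem_Ioo.2 ⟨hs', hcase⟩)]
          have hr1 : ramp b2 a0 (Real.exp (-s)) ≤ 1 := ramp_le_one hb2a0 _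
          nlinarith [mul_le_mul_of_nonneg_left hq hrp]
        · rw [Set.indicator_of_notMem (by
            simp only [Set.mem_Ioo, not_and, not_lt]; intro _; linarith)]
          have hr0 : ramp b2 a0 (Real.exp (-s)) = 0 := ramp_eq_zero hb2a0 (by
            rw [hb2def]; exact Real.exp_le_exp.2 (by linarith))
          nlinarith [mul_le_mul_of_nonneg_left hq hrp]
    -- lower integral bound
    have hIlow : (1-η) ^ c / c - 2*ε'*Real.Gamma c
        ≤ ∫ s in Set.Ioi (0:ℝ), s ^ (c-1) * (Real.exp (-s) * Q1.eval (Real.exp (-s))) := by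
      have hintL : Integrable (fun s : ℝ => (Set.Ioo (0:ℝ) (1-η)).indicator (fun s => s ^ (c-1)) s
          - 2*ε' * (Real.exp (-s) * s ^ (c-1))) (volume.restrict (Set.Ioi 0)) :=
        (indicator_rpow_integrable hc (by linarith)).sub
          ((Real.GammaIntegral_convergent hc).const_mul _)
      have hmono := setIntegral_mono_on hintL
        (integrable_weight hc (fun x => Q1.eval x) Q1.continuous) measurableSet_Ioi ?_
      · have hRval : (∫ s in Set.Ioi (0:ℝ), ((Set.Ioo (0:ℝ) (1-η)).indicator (fun s => s ^ (c-1)) s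
            - 2*ε' * (Real.exp (-s) * s ^ (c-1))))
            = (1-η)^c/c - 2*ε'*Real.Gamma c := by
          rw [integral_sub (indicator_rpow_integrable hc (by linarith))
            ((Real.GammaIntegral_convergent hc).const_mul _)]
          rw [indicator_rpow_integral hc (by linarith), integral_const_mul,
            ← Real.Gamma_eq_integral hc]
        linarith [hmono, le_of_eq hRval]
      · intro s hs
        have hs' : (0:ℝ) < s := hs
        have hx0 : (0:ℝ) < Real.exp (-s) := Real.exp_pos _
        have hx1 : Real.exp (-s) ≤ 1 := Real.exp_le_one_iff.2 (by linarith)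
        have hrp : (0:ℝ) ≤ s ^ (c-1) := Real.rpow_nonneg hs'.le _
        have h6 : ramp a0 b1 (Real.exp (-s)) / max (Real.exp (-s)) a0 - q1.eval (Real.exp (-s))
            < ε' := (abs_sub_lt_iff.1 (hq1 _ ⟨hx0.le, hx1⟩)).2
        have h8 : Real.exp (-s) * (ramp a0 b1 (Real.exp (-s)) / max (Real.exp (-s)) a0)
            = ramp a0 b1 (Real.exp (-s)) := ramp_div ha0pos ha0b1 _
        have h7 : Q1.eval (Real.exp (-s)) = q1.eval (Real.exp (-s)) - ε' := by
          rw [hQ1def]; simp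
        have hq : ramp a0 b1 (Real.exp (-s)) - 2*ε'*Real.exp (-s)
            ≤ Real.exp (-s) * Q1.eval (Real.exp (-s)) := by
          rw [h7]
          nlinarith [mul_lt_mul_of_pos_left h6 hx0]
        rcases lt_or_ge s (1-η) with hcase | hcase
        · rw [Set.indicator_of_mem (Set.mem_Ioo.2 ⟨hs', hcase⟩)]
          have hr1 : ramp a0 b1 (Real.exp (-s)) = 1 := ramp_eq_one ha0b1 (by
            rw [hb1def]; exact Real.exp_le_exp.2 (by linarith))
          nlinarith [mul_le_mul_of_nonneg_left hq hrp]
        · rw [Set.indicator_of_notMem (by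
            simp only [Set.mem_Ioo, not_and, not_lt]; intro _; linarith)]
          have hr0 : 0 ≤ ramp a0 b1 (Real.exp (-s)) := ramp_nonneg _ _ _
          nlinarith [mul_le_mul_of_nonneg_left hq hrp]
    -- limits
    have hkey2 := key_tendsto lam hnonneg hsum hc hZ Q2
    have hkey1 := key_tendsto lam hnonneg hsum hc hZ Q1
    have hAG : 0 < A / Real.Gamma c := div_pos hA hΓ
    have hL2 : (A / Real.Gamma c) *
        (∫ s in Set.Ioi (0:ℝ), s ^ (c-1) * (Real.exp (-s) * Q2.eval (Real.exp (-s))))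
        < F1 + ε := by
      have h9 := mul_le_mul_of_nonneg_left hIup hAG.le
      have h10 : (A/Real.Gamma c) * ((1+η)^c/c + 2*ε'*Real.Gamma c)
          = A*(1+η)^c/Real.Gamma (c+1) + 2*ε'*A := by
        rw [hΓ1]; field_simp
      linarith [hup]
    have hL1 : F1 - ε < (A / Real.Gamma c) *
        (∫ s in Set.Ioi (0:ℝ), s ^ (c-1) * (Real.exp (-s) * Q1.eval (Real.exp (-s)))) := by
      have h9 := mul_le_mul_of_nonneg_left hIlow hAG.le
      have h10 : (A/Real.Gamma c) * ((1-η)^c/c - 2*ε'*Real.Gamma c)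
          = A*(1-η)^c/Real.Gamma (c+1) - 2*ε'*A := by
        rw [hΓ1]; field_simp
      linarith [hlow]
    filter_upwards [hkey2.eventually_lt_const hL2, hkey1.eventually_const_lt hL1,
      self_mem_nhdsWithin] with t h12 h11 ht
    have ht' : (0:ℝ) < t := ht
    have htc : (0:ℝ) ≤ t ^ c := Real.rpow_nonneg ht'.le c
    -- comparison with counting function
    have hcmp2 : N t⁻¹ ≤ ∑' j, Real.exp (-t*lam j) * Q2.eval (Real.exp (-t*lam j)) := by
      rw [hN, ← (count_eq_tsum lam hinf t⁻¹).2]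
      refine Summable.tsum_le_tsum ?_ (count_eq_tsum lam hinf t⁻¹).1
        (summable_weight_poly lam hnonneg hsum ht' Q2)
      intro j
      have hx0 : (0:ℝ) < Real.exp (-t*lam j) := Real.exp_pos _
      have hx1 : Real.exp (-t*lam j) ≤ 1 := Real.exp_le_one_iff.2 (by nlinarith [hnonneg j])
      have h6 : ramp b2 a0 (Real.exp (-t*lam j)) / max (Real.exp (-t*lam j)) b2
          - q2.eval (Real.exp (-t*lam j)) < ε' := (abs_sub_lt_iff.1 (hq2 _ ⟨hx0.le, hx1⟩)).2
      have h8 : Real.exp (-t*lam j) * (ramp b2 a0 (Real.exp (-t*lam j)) / max (Real.exp (-t*lam j)) b2)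
          = ramp b2 a0 (Real.exp (-t*lam j)) := ramp_div hb2pos hb2a0 _
      have h7 : Q2.eval (Real.exp (-t*lam j)) = q2.eval (Real.exp (-t*lam j)) + ε' := by
        rw [hQ2def]; simp
      have h13 : ramp b2 a0 (Real.exp (-t*lam j))
          ≤ Real.exp (-t*lam j) * Q2.eval (Real.exp (-t*lam j)) := by
        rw [h7]
        nlinarith [mul_lt_mul_of_pos_left h6 hx0]
      rcases le_or_gt (lam j) t⁻¹ with hle | hgt
      · rw [if_pos hle]
        have hax : a0 ≤ Real.exp (-t*lam j) := by
          rw [ha0def]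
          apply Real.exp_le_exp.2
          have h14 : t * lam j ≤ 1 := by
            calc t * lam j ≤ t * t⁻¹ := mul_le_mul_of_nonneg_left hle ht'.le
              _ = 1 := mul_inv_cancel₀ ht'.ne'
          nlinarith
        rw [← ramp_eq_one hb2a0 hax]
        exact h13
      · rw [if_neg (not_le.2 hgt)]
        exact le_trans (ramp_nonneg _ _ _) h13
    have hcmp1 : (∑' j, Real.exp (-t*lam j) * Q1.eval (Real.exp (-t*lam j))) ≤ N t⁻¹ := by
      rw [hN, ← (count_eq_tsum lam hinf t⁻¹).2]
      refine Summable.tsum_le_tsum ?_ (summable_weight_poly lam hnonneg hsum ht' Q1)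
        (count_eq_tsum lam hinf t⁻¹).1
      intro j
      have hx0 : (0:ℝ) < Real.exp (-t*lam j) := Real.exp_pos _
      have hx1 : Real.exp (-t*lam j) ≤ 1 := Real.exp_le_one_iff.2 (by nlinarith [hnonneg j])
      have h6 : q1.eval (Real.exp (-t*lam j))
          - ramp a0 b1 (Real.exp (-t*lam j)) / max (Real.exp (-t*lam j)) a0 < ε' :=
        (abs_sub_lt_iff.1 (hq1 _ ⟨hx0.le, hx1⟩)).1
      have h8 : Real.exp (-t*lam j) * (ramp a0 b1 (Real.exp (-t*lam j)) / max (Real.exp (-t*lam j)) a0)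
          = ramp a0 b1 (Real.exp (-t*lam j)) := ramp_div ha0pos ha0b1 _
      have h7 : Q1.eval (Real.exp (-t*lam j)) = q1.eval (Real.exp (-t*lam j)) - ε' := by
        rw [hQ1def]; simp
      have h13 : Real.exp (-t*lam j) * Q1.eval (Real.exp (-t*lam j))
          ≤ ramp a0 b1 (Real.exp (-t*lam j)) := by
        rw [h7]
        nlinarith [mul_lt_mul_of_pos_left h6 hx0]
      rcases le_or_gt (lam j) t⁻¹ with hle | hgt
      · rw [if_pos hle]
        exact le_trans h13 (ramp_le_one ha0b1 _)
      · rw [if_neg (not_le.2 hgt)]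
        have hax : Real.exp (-t*lam j) ≤ a0 := by
          rw [ha0def]
          apply Real.exp_le_exp.2
          have h14 : 1 ≤ t * lam j := by
            have := mul_lt_mul_of_pos_left hgt ht'
            rw [mul_inv_cancel₀ ht'.ne'] at this
            linarith
          nlinarith
        calc Real.exp (-t*lam j) * Q1.eval (Real.exp (-t*lam j))
            ≤ ramp a0 b1 (Real.exp (-t*lam j)) := h13
          _ = 0 := ramp_eq_zero ha0b1 hax
    rw [Real.dist_eq, abs_sub_lt_iff]
    constructor
    · calc t ^ c * N t⁻¹ - F1
          ≤ t ^ c * (∑' j, Real.exp (-t*lam j) * Q2.eval (Real.exp (-t*lam j))) - F1 := by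
            nlinarith [mul_le_mul_of_nonneg_left hcmp2 htc]
        _ < ε := by linarith
    · calc F1 - t ^ c * N t⁻¹
          ≤ F1 - t ^ c * (∑' j, Real.exp (-t*lam j) * Q1.eval (Real.exp (-t*lam j))) := by
            nlinarith [mul_le_mul_of_nonneg_left hcmp1 htc]
        _ < ε := by linarith
  have hinv : Tendsto (fun x : ℝ => x⁻¹) atTop (nhdsWithin 0 (Set.Ioi 0)) :=
    tendsto_inv_atTop_nhdsGT_zero
  have hdiv := (hmain.comp hinv).div_const F1
  rw [div_self hF1.ne'] at hdiv
  apply Tendsto.congr' _ hdiv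
  filter_upwards [eventually_gt_atTop 0] with x hx
  have hxc : (0:ℝ) < x ^ c := Real.rpow_pos_of_pos hx c
  simp only [Function.comp]
  rw [inv_inv, Real.inv_rpow hx.le]
  rw [div_eq_div_iff hF1.ne' (mul_pos hF1 hxc).ne']
  have hne : (x:ℝ) ^ c ≠ 0 := hxc.ne'
  show (x ^ c)⁻¹ * N x * (A / Real.Gamma (c+1) * x ^ c) = N x * (A / Real.Gamma (c+1))
  field_simp
end

section
/- Let φ(s) = √π Γ(s − 1/2)ζ(2s − 1)/(Γ(s)ζ(2s)). Then φ(1/2) = −1. -/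
open Complex Filter

/-- The scattering determinant `φ(s) = √π Γ(s-1/2)ζ(2s-1)/(Γ(s)ζ(2s))`
satisfies `lim_{s→1/2} φ(s) = -1`. -/
theorem scatteringPhi_at_half :
    Tendsto (fun s : ℂ =>
        (Real.sqrt Real.pi : ℂ) * Complex.Gamma (s - 1 / 2) *
          riemannZeta (2 * s - 1) / (Complex.Gamma s * riemannZeta (2 * s)))
      (nhdsWithin (1 / 2 : ℂ) {(1 / 2 : ℂ)}ᶜ) (nhds (-1)) := by
  have hπ : (Real.sqrt Real.pi : ℂ) ≠ 0 :=
    ofReal_ne_zero.mpr (Real.sqrt_ne_zero'.mpr Real.pi_pos).symm.symm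
  have hGhalf : Complex.Gamma (1 / 2) = (Real.sqrt Real.pi : ℂ) := by
    rw [show (1 / 2 : ℂ) = ((1 / 2 : ℝ) : ℂ) by norm_num, Complex.Gamma_ofReal,
      Real.Gamma_one_half_eq]
  -- limit of Γ(s+1/2) → Γ(1) = 1
  have hG1 : Tendsto (fun s : ℂ => Complex.Gamma (s + 1 / 2))
      (nhdsWithin (1 / 2 : ℂ) {(1 / 2 : ℂ)}ᶜ) (nhds 1) := by
    have hd : DifferentiableAt ℂ Complex.Gamma 1 := by
      refine Complex.differentiableAt_Gamma 1 fun m hm => ?_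
      have h1 : (1 : ℝ) = -(m : ℝ) := by exact_mod_cast congrArg Complex.re hm
      linarith [Nat.cast_nonneg (α := ℝ) m]
    have haff : Tendsto (fun s : ℂ => s + 1 / 2) (nhds (1 / 2)) (nhds 1) := by
      have h := (continuous_add_right (1 / 2 : ℂ)).tendsto (1 / 2 : ℂ)
      rwa [show (1 / 2 : ℂ) + 1 / 2 = 1 by norm_num] at h
    have := hd.continuousAt.tendsto.comp haff
    rw [Complex.Gamma_one] at this
    exact this.mono_left nhdsWithin_le_nhds
  -- limit of ζ(2s-1) → ζ 0 = -1/2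
  have hZ0 : Tendsto (fun s : ℂ => riemannZeta (2 * s - 1))
      (nhdsWithin (1 / 2 : ℂ) {(1 / 2 : ℂ)}ᶜ) (nhds (-1 / 2)) := by
    have hd : DifferentiableAt ℂ riemannZeta 0 := differentiableAt_riemannZeta (by norm_num)
    have haff : Tendsto (fun s : ℂ => 2 * s - 1) (nhds (1 / 2)) (nhds 0) := by
      have h : Tendsto (fun s : ℂ => 2 * s - 1) (nhds (1 / 2 : ℂ)) (nhds (2 * (1 / 2 : ℂ) - 1)) :=
        ((continuous_mul_left (2 : ℂ)).sub continuous_const).tendsto (1 / 2 : ℂ)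
      rwa [show 2 * (1 / 2 : ℂ) - 1 = 0 by norm_num] at h
    have := hd.continuousAt.tendsto.comp haff
    rw [riemannZeta_zero] at this
    exact this.mono_left nhdsWithin_le_nhds
  -- limit of Γ(s) → √π
  have hGh : Tendsto (fun s : ℂ => Complex.Gamma s)
      (nhdsWithin (1 / 2 : ℂ) {(1 / 2 : ℂ)}ᶜ) (nhds (Real.sqrt Real.pi : ℂ)) := by
    have hd : DifferentiableAt ℂ Complex.Gamma (1 / 2) := by
      refine Complex.differentiableAt_Gamma _ fun m hm => ?_
      rw [show (1 / 2 : ℂ) = ((1 / 2 : ℝ) : ℂ) by norm_num,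
        show -(m : ℂ) = ((-(m : ℝ) : ℝ) : ℂ) by push_cast; ring] at hm
      have h1 := Complex.ofReal_inj.mp hm
      linarith [Nat.cast_nonneg (α := ℝ) m]
    have := hd.continuousAt.tendsto
    rw [hGhalf] at this
    exact this.mono_left nhdsWithin_le_nhds
  -- limit of (s-1/2) ζ(2s) → 1/2
  have hmap : Tendsto (fun s : ℂ => 2 * s)
      (nhdsWithin (1 / 2 : ℂ) {(1 / 2 : ℂ)}ᶜ) (nhdsWithin (1 : ℂ) {(1 : ℂ)}ᶜ) := by
    apply tendsto_nhdsWithin_of_tendsto_nhds_of_eventually_within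
    · have := (continuous_mul_left (2 : ℂ)).tendsto (1 / 2 : ℂ)
      rw [show (2 * (1 / 2 : ℂ)) = 1 by norm_num] at this
      exact this.mono_left nhdsWithin_le_nhds
    · filter_upwards [self_mem_nhdsWithin] with s hs
      simp only [Set.mem_compl_iff, Set.mem_singleton_iff] at hs ⊢
      exact fun h => hs (by linear_combination h / 2)
  have hZres : Tendsto (fun s : ℂ => (s - 1 / 2) * riemannZeta (2 * s))
      (nhdsWithin (1 / 2 : ℂ) {(1 / 2 : ℂ)}ᶜ) (nhds (1 / 2)) := by
    have h := riemannZeta_residue_one.comp hmap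
    have h2 := h.const_mul (1 / 2 : ℂ)
    rw [mul_one] at h2
    refine h2.congr' ?_
    filter_upwards with s
    simp only [Function.comp]
    ring
  have hden : Tendsto (fun s : ℂ => Complex.Gamma s * ((s - 1 / 2) * riemannZeta (2 * s)))
      (nhdsWithin (1 / 2 : ℂ) {(1 / 2 : ℂ)}ᶜ)
      (nhds ((Real.sqrt Real.pi : ℂ) * (1 / 2))) := hGh.mul hZres
  have hnum : Tendsto (fun s : ℂ =>
      (Real.sqrt Real.pi : ℂ) * Complex.Gamma (s + 1 / 2) * riemannZeta (2 * s - 1))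
      (nhdsWithin (1 / 2 : ℂ) {(1 / 2 : ℂ)}ᶜ)
      (nhds ((Real.sqrt Real.pi : ℂ) * 1 * (-1 / 2))) :=
    (tendsto_const_nhds.mul hG1).mul hZ0
  have hd0 : (Real.sqrt Real.pi : ℂ) * (1 / 2) ≠ 0 := mul_ne_zero hπ (by norm_num)
  have hdiv := hnum.div hden hd0
  have heq : ((Real.sqrt Real.pi : ℂ) * 1 * (-1 / 2)) /
      ((Real.sqrt Real.pi : ℂ) * (1 / 2)) = -1 := by
    field_simp
  rw [heq] at hdiv
  refine hdiv.congr' ?_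
  filter_upwards [self_mem_nhdsWithin] with s hs
  simp only [Set.mem_compl_iff, Set.mem_singleton_iff] at hs
  have hs' : s - 1 / 2 ≠ 0 := sub_ne_zero.mpr hs
  have hG : Complex.Gamma (s + 1 / 2) = (s - 1 / 2) * Complex.Gamma (s - 1 / 2) := by
    rw [show s + 1 / 2 = (s - 1 / 2) + 1 by ring, Complex.Gamma_add_one _ hs']
  simp only [Pi.div_apply]
  rw [hG,
    show (Real.sqrt Real.pi : ℂ) * ((s - 1 / 2) * Complex.Gamma (s - 1 / 2)) *
        riemannZeta (2 * s - 1) =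
      (s - 1 / 2) * ((Real.sqrt Real.pi : ℂ) * Complex.Gamma (s - 1 / 2) *
        riemannZeta (2 * s - 1)) by ring,
    show Complex.Gamma s * ((s - 1 / 2) * riemannZeta (2 * s)) =
      (s - 1 / 2) * (Complex.Gamma s * riemannZeta (2 * s)) by ring,
    mul_div_mul_left _ _ hs']
end
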